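/- Fix an integer k ≥ 1. The generating function of the longest-run probabilities satisfies, in the ring of formal power series ℝ⟦X⟧, (1 − X)·∑_{n≥0} P(L_n = k)·X^n = ∑_{v≥0} P(V(k) = v)·X^v − ∑_{v≥0} P(V(k+1) = v)·X^v. -/

import Mathlib

open MeasureTheory Finset PowerSeries

/-- Waiting time for the first success run of length `k`: the smallest `n ≥ k` such that
trials `n - k + 1, …, n` are all successes (trials are indexed from `1`). -/
noncomputable def waitingTime (k : ℕ) (ω : ℕ → Bool) : ℕ :=
  sInf {n | k ≤ n ∧ ∀ i ∈ Finset.Icc (n - k + 1) n, ω i = true}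

/-- Length of the longest run of consecutive successes among trials `1, …, n`. -/
noncomputable def longestRun (n : ℕ) (ω : ℕ → Bool) : ℕ :=
  sSup {m | ∃ j, j + m ≤ n ∧ ∀ i ∈ Finset.Ioc j (j + m), ω i = true}

-- characterization of Nat sInf
lemma nat_sInf_eq_iff (S : Set ℕ) (v : ℕ) :
    sInf S = v ↔ (v ∈ S ∧ ∀ u < v, u ∉ S) ∨ (v = 0 ∧ S = ∅) := by
  constructor
  · intro h
    rcases S.eq_empty_or_nonempty with hS | hS
    · right; simp [hS] at h ⊢; omega
    · left
      subst h
      exact ⟨Nat.sInf_mem hS, fun u hu => Nat.notMem_of_lt_sInf hu⟩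
  · rintro (⟨hv, hmin⟩ | ⟨hv, hS⟩)
    · refine le_antisymm (Nat.sInf_le hv) ?_
      by_contra h
      push_neg at h
      exact hmin _ h (Nat.sInf_mem ⟨v, hv⟩)
    · simp [hS, hv]

-- measurability of one "run ending at n" set
lemma meas_run (m n : ℕ) :
    MeasurableSet {ω : ℕ → Bool | m ≤ n ∧ ∀ i ∈ Finset.Icc (n - m + 1) n, ω i = true} := by
  by_cases h : m ≤ n
  · have : {ω : ℕ → Bool | m ≤ n ∧ ∀ i ∈ Finset.Icc (n - m + 1) n, ω i = true}
        = ⋂ i ∈ Finset.Icc (n - m + 1) n, {ω : ℕ → Bool | ω i = true} := by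
      ext ω; simp [h]
    rw [this]
    exact MeasurableSet.biInter (Finset.Icc _ _).countable_toSet
      (fun i _ => by
        have : {ω : ℕ → Bool | ω i = true} = (fun ω : ℕ → Bool => ω i) ⁻¹' {true} := by
          ext ω; simp
        rw [this]
        exact measurable_pi_apply i (MeasurableSet.of_discrete))
  · have : {ω : ℕ → Bool | m ≤ n ∧ ∀ i ∈ Finset.Icc (n - m + 1) n, ω i = true} = ∅ := by
      ext ω; simp [h]
    rw [this]; exact MeasurableSet.empty

lemma meas_wt (m v : ℕ) : MeasurableSet {ω : ℕ → Bool | waitingTime m ω = v} := by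
  have : {ω : ℕ → Bool | waitingTime m ω = v}
      = ({ω : ℕ → Bool | m ≤ v ∧ ∀ i ∈ Finset.Icc (v - m + 1) v, ω i = true}
          ∩ ⋂ u ∈ Set.Iio v, {ω : ℕ → Bool | m ≤ u ∧ ∀ i ∈ Finset.Icc (u - m + 1) u, ω i = true}ᶜ)
        ∪ ({ω : ℕ → Bool | v = 0} ∩
            ⋂ u : ℕ, {ω : ℕ → Bool | m ≤ u ∧ ∀ i ∈ Finset.Icc (u - m + 1) u, ω i = true}ᶜ) := by
    ext ω
    rw [Set.mem_setOf_eq, waitingTime, nat_sInf_eq_iff]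
    constructor
    · rintro (⟨h1, h2⟩ | ⟨h1, h2⟩)
      · left; exact ⟨h1, by simpa using h2⟩
      · right
        constructor
        · exact h1
        · simp only [Set.mem_iInter, Set.mem_compl_iff, Set.mem_setOf_eq]
          intro u hu
          have : u ∈ ({n | m ≤ n ∧ ∀ i ∈ Finset.Icc (n - m + 1) n, ω i = true} : Set ℕ) := hu
          rw [h2] at this; exact this
    · rintro (⟨h1, h2⟩ | ⟨h1, h2⟩)
      · left; exact ⟨h1, by simpa using h2⟩
      · right
        refine ⟨h1, Set.eq_empty_iff_forall_notMem.2 fun u hu => ?_⟩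
        have := Set.mem_iInter.1 h2 u
        exact this hu
  rw [this]
  apply MeasurableSet.union
  · exact (meas_run m v).inter (MeasurableSet.biInter ((Set.Iio v).to_countable)
      (fun u _ => (meas_run m u).compl))
  · apply MeasurableSet.inter
    · by_cases h : v = 0 <;> simp [h]
    · exact MeasurableSet.iInter (fun u => (meas_run m u).compl)

lemma longestRun_ge_iff (n m : ℕ) (ω : ℕ → Bool) :
    m ≤ longestRun n ω ↔ ∃ j, j + m ≤ n ∧ ∀ i ∈ Finset.Ioc j (j + m), ω i = true := by
  set R : Set ℕ := {m | ∃ j, j + m ≤ n ∧ ∀ i ∈ Finset.Ioc j (j + m), ω i = true} with hR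
  have hne : R.Nonempty := ⟨0, 0, by simp⟩
  have hbdd : BddAbove R := ⟨n, fun x ⟨j, hj, _⟩ => by omega⟩
  have hdc : ∀ a b, a ≤ b → b ∈ R → a ∈ R := by
    rintro a b hab ⟨j, hj, hrun⟩
    exact ⟨j, by omega, fun i hi => hrun i (by simp at hi ⊢; omega)⟩
  constructor
  · intro h
    exact hdc m _ h (Nat.sSup_mem hne hbdd)
  · intro h
    exact le_csSup hbdd h

lemma run_iff_wt (n m : ℕ) (hm : 1 ≤ m) (ω : ℕ → Bool) :
    (∃ j, j + m ≤ n ∧ ∀ i ∈ Finset.Ioc j (j + m), ω i = true)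
      ↔ waitingTime m ω ∈ Finset.Icc 1 n := by
  set S : Set ℕ := {v | m ≤ v ∧ ∀ i ∈ Finset.Icc (v - m + 1) v, ω i = true} with hS
  constructor
  · rintro ⟨j, hj, hrun⟩
    have hmem : j + m ∈ S := by
      refine ⟨by omega, fun i hi => hrun i ?_⟩
      simp at hi ⊢; omega
    have h1 : waitingTime m ω ∈ S := Nat.sInf_mem ⟨_, hmem⟩
    have h2 : waitingTime m ω ≤ j + m := Nat.sInf_le hmem
    simp only [Finset.mem_Icc]
    exact ⟨by have := h1.1; omega, by omega⟩
  · intro h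
    simp only [Finset.mem_Icc] at h
    have hSne : S.Nonempty := by
      by_contra hc
      rw [Set.not_nonempty_iff_eq_empty] at hc
      have : waitingTime m ω = 0 := by
        rw [waitingTime, ← hS, hc]; simp
      omega
    have hmem : waitingTime m ω ∈ S := Nat.sInf_mem hSne
    obtain ⟨hm1, hm2⟩ := hmem
    refine ⟨waitingTime m ω - m, by omega, fun i hi => hm2 i ?_⟩
    simp at hi ⊢; omega

lemma event_eq (n k : ℕ) (hk : 1 ≤ k) :
    {ω : ℕ → Bool | longestRun n ω = k}
      = (⋃ v ∈ Finset.Icc 1 n, {ω : ℕ → Bool | waitingTime k ω = v})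
        \ (⋃ v ∈ Finset.Icc 1 n, {ω : ℕ → Bool | waitingTime (k + 1) ω = v}) := by
  ext ω
  simp only [Set.mem_setOf_eq, Set.mem_diff, Set.mem_iUnion, Set.mem_setOf_eq,
    exists_prop]
  have h1 : longestRun n ω = k ↔ k ≤ longestRun n ω ∧ ¬ (k + 1 ≤ longestRun n ω) := by omega
  rw [h1, longestRun_ge_iff, longestRun_ge_iff, run_iff_wt n k hk, run_iff_wt n (k+1) (by omega)]
  constructor
  · rintro ⟨ha, hb⟩
    exact ⟨⟨_, ha, rfl⟩, fun ⟨v, hv, he⟩ => hb (he ▸ hv)⟩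
  · rintro ⟨⟨v, hv, he⟩, hb⟩
    exact ⟨he ▸ hv, fun hc => hb ⟨_, hc, rfl⟩⟩

lemma sumform (μ : Measure (ℕ → Bool)) [IsProbabilityMeasure μ] (n k : ℕ) (hk : 1 ≤ k) :
    (μ {ω | longestRun n ω = k}).toReal
      = ∑ v ∈ Finset.Icc 1 n, (μ {ω | waitingTime k ω = v}).toReal
        - ∑ v ∈ Finset.Icc 1 n, (μ {ω | waitingTime (k + 1) ω = v}).toReal := by
  have hdisj : ∀ m : ℕ, Set.PairwiseDisjoint (↑(Finset.Icc 1 n))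
      (fun v => {ω : ℕ → Bool | waitingTime m ω = v}) := by
    intro m v _ u _ hvu
    refine Set.disjoint_left.2 fun ω h1 h2 => hvu ?_
    simp only [Set.mem_setOf_eq] at h1 h2; omega
  have hmeasA : ∀ m : ℕ, ∀ v ∈ Finset.Icc 1 n,
      MeasurableSet {ω : ℕ → Bool | waitingTime m ω = v} := fun m v _ => meas_wt m v
  have hsum : ∀ m : ℕ, μ (⋃ v ∈ Finset.Icc 1 n, {ω : ℕ → Bool | waitingTime m ω = v})
      = ∑ v ∈ Finset.Icc 1 n, μ {ω : ℕ → Bool | waitingTime m ω = v} :=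
    fun m => measure_biUnion_finset (hdisj m) (hmeasA m)
  have hBA : (⋃ v ∈ Finset.Icc 1 n, {ω : ℕ → Bool | waitingTime (k + 1) ω = v})
      ⊆ ⋃ v ∈ Finset.Icc 1 n, {ω : ℕ → Bool | waitingTime k ω = v} := by
    intro ω hω
    simp only [Set.mem_iUnion, Set.mem_setOf_eq, exists_prop] at hω ⊢
    obtain ⟨v, hv, he⟩ := hω
    have h1 : waitingTime (k + 1) ω ∈ Finset.Icc 1 n := he ▸ hv
    rw [← run_iff_wt n (k+1) (by omega)] at h1
    obtain ⟨j, hj, hrun⟩ := h1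
    have h2 : waitingTime k ω ∈ Finset.Icc 1 n := by
      rw [← run_iff_wt n k hk]
      exact ⟨j, by omega, fun i hi => hrun i (by simp at hi ⊢; omega)⟩
    exact ⟨_, h2, rfl⟩
  have hBmeas : MeasurableSet (⋃ v ∈ Finset.Icc 1 n,
      {ω : ℕ → Bool | waitingTime (k + 1) ω = v}) :=
    (Finset.Icc 1 n).measurableSet_biUnion (fun v _ => meas_wt (k+1) v)
  rw [event_eq n k hk,
    measure_diff hBA hBmeas.nullMeasurableSet (measure_ne_top μ _),
    ENNReal.toReal_sub_of_le (measure_mono hBA) (measure_ne_top μ _), hsum, hsum,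
    ENNReal.toReal_sum (fun v _ => measure_ne_top μ _),
    ENNReal.toReal_sum (fun v _ => measure_ne_top μ _)]

def pat (s : Finset ℕ) : ℕ → Bool := fun i => decide (i ∈ s)

def cylSet (n : ℕ) (b : ℕ → Bool) : Set (ℕ → Bool) :=
  {ω | ∀ i, 1 ≤ i → i ≤ n → ω i = b i}

lemma cyl_meas (n : ℕ) (b : ℕ → Bool) : MeasurableSet (cylSet n b) := by
  have : cylSet n b = ⋂ i, {ω : ℕ → Bool | 1 ≤ i → i ≤ n → ω i = b i} := by
    ext ω; simp [cylSet]
  rw [this]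
  refine MeasurableSet.iInter fun i => ?_
  by_cases h : 1 ≤ i ∧ i ≤ n
  · have : {ω : ℕ → Bool | 1 ≤ i → i ≤ n → ω i = b i}
        = (fun ω : ℕ → Bool => ω i) ⁻¹' {b i} := by
      ext ω; simp [h.1, h.2]
    rw [this]
    exact measurable_pi_apply i (MeasurableSet.of_discrete)
  · have : {ω : ℕ → Bool | 1 ≤ i → i ≤ n → ω i = b i} = Set.univ := by
      ext ω; simp only [Set.mem_setOf_eq, Set.mem_univ, iff_true]
      intro h1 h2; exact absurd ⟨h1, h2⟩ h
    rw [this]; exact MeasurableSet.univ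

lemma cyl_disjoint {n : ℕ} {s t : Finset ℕ} (hs : s ⊆ Finset.Icc 1 n)
    (ht : t ⊆ Finset.Icc 1 n) (hst : s ≠ t) :
    Disjoint (cylSet n (pat s)) (cylSet n (pat t)) := by
  refine Set.disjoint_left.2 fun ω h1 h2 => hst ?_
  ext i
  by_cases hi : i ∈ Finset.Icc 1 n
  · simp only [Finset.mem_Icc] at hi
    have e1 := h1 i hi.1 hi.2
    have e2 := h2 i hi.1 hi.2
    have : pat s i = pat t i := e1 ▸ e2 ▸ rfl
    simpa [pat, decide_eq_decide] using this
  · exact ⟨fun h => absurd (hs h) hi, fun h => absurd (ht h) hi⟩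

open scoped Classical in
lemma decomp_set (n : ℕ) (E : Set (ℕ → Bool))
    (hdet : ∀ ω ω' : ℕ → Bool, (∀ i, 1 ≤ i → i ≤ n → ω i = ω' i) → (ω ∈ E ↔ ω' ∈ E)) :
    E = ⋃ s ∈ (Finset.Icc 1 n).powerset.filter (fun s => pat s ∈ E), cylSet n (pat s) := by
  ext ω
  simp only [Set.mem_iUnion, Finset.mem_filter, Finset.mem_powerset, exists_prop]
  constructor
  · intro hω
    refine ⟨(Finset.Icc 1 n).filter (fun i => ω i = true), ⟨Finset.filter_subset _ _, ?_⟩, ?_⟩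
    · rw [← hdet ω _ ?_]
      · exact hω
      · intro i h1 h2
        simp [pat, Finset.mem_filter, Finset.mem_Icc, h1, h2]
    · intro i h1 h2
      simp [pat, Finset.mem_filter, Finset.mem_Icc, h1, h2]
  · rintro ⟨s, ⟨_, hsE⟩, hcyl⟩
    exact (hdet ω (pat s) hcyl).2 hsE

open scoped Classical in
lemma decomp_meas (p : ℝ) (μ : Measure (ℕ → Bool))
    (hμ : ∀ (n : ℕ) (b : ℕ → Bool),
      μ {ω | ∀ i, 1 ≤ i → i ≤ n → ω i = b i}
        = ENNReal.ofReal (∏ i ∈ Finset.Icc 1 n, if b i = true then p else 1 - p))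
    (n : ℕ) (E : Set (ℕ → Bool))
    (hdet : ∀ ω ω' : ℕ → Bool, (∀ i, 1 ≤ i → i ≤ n → ω i = ω' i) → (ω ∈ E ↔ ω' ∈ E)) :
    μ E = ∑ s ∈ (Finset.Icc 1 n).powerset.filter (fun s => pat s ∈ E),
      ENNReal.ofReal (∏ i ∈ Finset.Icc 1 n, if pat s i = true then p else 1 - p) := by
  conv_lhs => rw [decomp_set n E hdet]
  rw [measure_biUnion_finset ?_ (fun s _ => cyl_meas n (pat s))]
  · exact Finset.sum_congr rfl fun s _ => hμ n (pat s)
  · intro s hs t ht hst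
    simp only [Finset.coe_filter, Set.mem_setOf_eq, Finset.mem_powerset] at hs ht
    exact cyl_disjoint hs.1 ht.1 hst

def runFree (m N : ℕ) : Set (ℕ → Bool) :=
  {ω | ∀ j < N, ∃ i ∈ Finset.Icc (j * m + 1) (j * m + m), ω i = false}

lemma runFree_det (m N : ℕ) (ω ω' : ℕ → Bool)
    (h : ∀ i, 1 ≤ i → i ≤ N * m → ω i = ω' i) :
    ω ∈ runFree m N ↔ ω' ∈ runFree m N := by
  have key : ∀ j < N, ∀ i ∈ Finset.Icc (j * m + 1) (j * m + m), 1 ≤ i ∧ i ≤ N * m := by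
    intro j hj i hi
    simp only [Finset.mem_Icc] at hi
    have h1 : (j + 1) * m ≤ N * m := Nat.mul_le_mul_right m (by omega)
    have h2 : (j + 1) * m = j * m + m := by ring
    omega
  constructor
  · intro hω j hj
    obtain ⟨i, hi, hfi⟩ := hω j hj
    exact ⟨i, hi, by rw [← h i (key j hj i hi).1 (key j hj i hi).2]; exact hfi⟩
  · intro hω j hj
    obtain ⟨i, hi, hfi⟩ := hω j hj
    exact ⟨i, hi, by rw [h i (key j hj i hi).1 (key j hj i hi).2]; exact hfi⟩

open scoped Classical in
lemma runFree_meas (p : ℝ) (hp0 : 0 < p) (hp1 : p < 1) (μ : Measure (ℕ → Bool))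
    [IsProbabilityMeasure μ]
    (hμ : ∀ (n : ℕ) (b : ℕ → Bool),
      μ {ω | ∀ i, 1 ≤ i → i ≤ n → ω i = b i}
        = ENNReal.ofReal (∏ i ∈ Finset.Icc 1 n, if b i = true then p else 1 - p))
    (m : ℕ) (N : ℕ) :
    μ (runFree m N) = ENNReal.ofReal ((1 - p ^ m) ^ N) := by
  have hr0 : 0 ≤ 1 - p ^ m := by
    have := pow_le_one₀ hp0.le hp1.le (n := m); linarith
  induction N with
  | zero =>
    have : runFree m 0 = Set.univ := by ext ω; simp [runFree]
    simp [this]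
  | succ N ih =>
    set block : Finset ℕ := Finset.Icc (N * m + 1) (N * m + m) with hblock
    set good := (Finset.Icc 1 (N * m)).powerset.filter (fun s => pat s ∈ runFree m N)
      with hgood
    set P : Finset ℕ → ℝ :=
      fun s => ∏ i ∈ Finset.Icc 1 (N * m), if pat s i = true then p else 1 - p with hP
    have hPnn : ∀ s, 0 ≤ P s := by
      intro s
      refine Finset.prod_nonneg fun i _ => ?_
      by_cases h : pat s i = true <;> simp [h] <;> linarith
    -- the key sub-claim about the extended cylinder
    have hcc : ∀ s ∈ good, ∀ ω ∈ cylSet (N * m) (pat s),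
        (ω ∈ cylSet (N * m + m) (pat (s ∪ block)) ↔ ∀ i ∈ block, ω i = true) := by
      intro s hs ω hω
      simp only [hgood, Finset.mem_filter, Finset.mem_powerset] at hs
      constructor
      · intro h i hi
        simp only [hblock, Finset.mem_Icc] at hi
        have := h i (by omega) (by omega)
        rw [this]
        simp [pat, Finset.mem_union, hblock, Finset.mem_Icc]
        omega
      · intro h i h1 h2
        by_cases hiN : i ≤ N * m
        · rw [hω i h1 hiN]
          have hib : i ∉ block := by simp [hblock, Finset.mem_Icc]; omega
          simp only [pat, Finset.mem_union]
          rw [decide_eq_decide.2 (show i ∈ s ∨ i ∈ block ↔ i ∈ s by tauto)]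
        · have hib : i ∈ block := by simp [hblock, Finset.mem_Icc]; omega
          rw [h i hib]
          simp [pat, Finset.mem_union, hib]
    have hsub : ∀ s ∈ good, cylSet (N * m + m) (pat (s ∪ block)) ⊆ cylSet (N * m) (pat s) := by
      intro s hs ω hω i h1 h2
      simp only [hgood, Finset.mem_filter, Finset.mem_powerset] at hs
      rw [hω i h1 (by omega)]
      have hib : i ∉ block := by simp [hblock, Finset.mem_Icc]; omega
      simp only [pat, Finset.mem_union]
      rw [decide_eq_decide.2 (show i ∈ s ∨ i ∈ block ↔ i ∈ s by tauto)]
    -- set decomposition of runFree m (N+1)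
    have hEq : runFree m (N + 1)
        = ⋃ s ∈ good, (cylSet (N * m) (pat s) \ cylSet (N * m + m) (pat (s ∪ block))) := by
      ext ω
      have step1 : ω ∈ runFree m (N + 1)
          ↔ ω ∈ runFree m N ∧ ∃ i ∈ block, ω i = false := by
        simp only [runFree, Set.mem_setOf_eq, hblock]
        constructor
        · intro h
          exact ⟨fun j hj => h j (by omega), h N (by omega)⟩
        · rintro ⟨h1, h2⟩ j hj
          rcases Nat.lt_or_ge j N with h | h
          · exact h1 j h
          · have : j = N := by omega
            subst this; exact h2
      rw [step1]
      conv_lhs => rw [decomp_set (N * m) (runFree m N) (runFree_det m N)]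
      simp only [Set.mem_iUnion, exists_prop, Set.mem_diff]
      constructor
      · rintro ⟨⟨s, hs, hcyl⟩, hfalse⟩
        refine ⟨s, hs, hcyl, fun hc => ?_⟩
        obtain ⟨i, hi, hfi⟩ := hfalse
        have := (hcc s hs ω hcyl).1 hc i hi
        rw [this] at hfi; simp at hfi
      · rintro ⟨s, hs, hcyl, hnc⟩
        refine ⟨⟨s, hs, hcyl⟩, ?_⟩
        by_contra hc
        push_neg at hc
        refine hnc ((hcc s hs ω hcyl).2 fun i hi => ?_)
        have := hc i hi
        cases h : ω i
        · exact absurd h (this)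
        · rfl
    rw [hEq]
    rw [measure_biUnion_finset ?_ (fun s hs => (cyl_meas _ _).diff (cyl_meas _ _))]
    · -- compute each term
      have hterm : ∀ s ∈ good,
          μ (cylSet (N * m) (pat s) \ cylSet (N * m + m) (pat (s ∪ block)))
            = ENNReal.ofReal (P s * (1 - p ^ m)) := by
        intro s hs
        have hs' := hs
        simp only [hgood, Finset.mem_filter, Finset.mem_powerset] at hs'
        rw [measure_diff (hsub s hs) (cyl_meas _ _).nullMeasurableSet (measure_ne_top μ _)]
        have e1 : μ (cylSet (N * m) (pat s)) = ENNReal.ofReal (P s) := hμ (N * m) (pat s)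
        have hunion : Finset.Icc 1 (N * m + m) = Finset.Icc 1 (N * m) ∪ block := by
          ext i; simp only [Finset.mem_Icc, Finset.mem_union, hblock]; omega
        have hdisj2 : Disjoint (Finset.Icc 1 (N * m)) block := by
          rw [Finset.disjoint_left]
          intro i hi hib
          simp only [Finset.mem_Icc, hblock] at hi hib
          omega
        have e2 : μ (cylSet (N * m + m) (pat (s ∪ block)))
            = ENNReal.ofReal (P s * p ^ m) := by
          rw [show (cylSet (N * m + m) (pat (s ∪ block)))
              = {ω | ∀ i, 1 ≤ i → i ≤ N * m + m → ω i = pat (s ∪ block) i} from rfl,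
            hμ (N * m + m) (pat (s ∪ block)), hunion,
            Finset.prod_union hdisj2]
          have eA : (∏ i ∈ Finset.Icc 1 (N * m),
              if pat (s ∪ block) i = true then p else 1 - p) = P s := by
            refine Finset.prod_congr rfl fun i hi => ?_
            simp only [Finset.mem_Icc] at hi
            have hib : i ∉ block := by simp [hblock, Finset.mem_Icc]; omega
            simp only [pat, Finset.mem_union]
            simp [hib]
          have eB : (∏ i ∈ block, if pat (s ∪ block) i = true then p else 1 - p)
              = p ^ m := by
            have hc : ∀ i ∈ block, (if pat (s ∪ block) i = true then p else 1 - p) = p := by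
              intro i hi
              simp [pat, Finset.mem_union, hi]
            rw [Finset.prod_congr rfl hc, Finset.prod_const]
            congr 1
            rw [hblock, Nat.card_Icc]
            omega
          rw [eA, eB]
        rw [e1, e2,
          show P s * (1 - p ^ m) = P s - P s * p ^ m by ring,
          ENNReal.ofReal_sub _ (mul_nonneg (hPnn s) (pow_nonneg hp0.le m))]
      rw [Finset.sum_congr rfl hterm]
      have : ∀ s ∈ good, ENNReal.ofReal (P s * (1 - p ^ m))
          = ENNReal.ofReal (P s) * ENNReal.ofReal (1 - p ^ m) :=
        fun s _ => ENNReal.ofReal_mul (hPnn s)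
      rw [Finset.sum_congr rfl this, ← Finset.sum_mul,
        ← decomp_meas p μ hμ (N * m) (runFree m N) (runFree_det m N), ih,
        ← ENNReal.ofReal_mul (pow_nonneg hr0 N), ← pow_succ]
    · intro s hs t ht hst
      simp only [hgood, Finset.coe_filter, Set.mem_setOf_eq, Finset.mem_powerset] at hs ht
      exact Disjoint.mono Set.diff_subset Set.diff_subset (cyl_disjoint hs.1 ht.1 hst)

lemma wt_zero_null (p : ℝ) (hp0 : 0 < p) (hp1 : p < 1) (μ : Measure (ℕ → Bool))
    [IsProbabilityMeasure μ]
    (hμ : ∀ (n : ℕ) (b : ℕ → Bool),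
      μ {ω | ∀ i, 1 ≤ i → i ≤ n → ω i = b i}
        = ENNReal.ofReal (∏ i ∈ Finset.Icc 1 n, if b i = true then p else 1 - p))
    (m : ℕ) (hm : 1 ≤ m) :
    μ {ω | waitingTime m ω = 0} = 0 := by
  have hsubset : ∀ N, {ω : ℕ → Bool | waitingTime m ω = 0} ⊆ runFree m N := by
    intro N ω hω j hj
    simp only [Set.mem_setOf_eq] at hω
    have hSe : {n | m ≤ n ∧ ∀ i ∈ Finset.Icc (n - m + 1) n, ω i = true} = ∅ := by
      by_contra hc
      have hne : {n | m ≤ n ∧ ∀ i ∈ Finset.Icc (n - m + 1) n, ω i = true}.Nonempty :=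
        Set.nonempty_iff_ne_empty.2 hc
      have := Nat.sInf_mem hne
      rw [waitingTime] at hω
      rw [hω] at this
      exact absurd this.1 (by omega)
    by_contra hc
    push_neg at hc
    have hall : ∀ i ∈ Finset.Icc (j * m + 1) (j * m + m), ω i = true := by
      intro i hi
      have := hc i hi
      cases h : ω i
      · exact absurd h this
      · rfl
    have hmem : (j * m + m) ∈ {n | m ≤ n ∧ ∀ i ∈ Finset.Icc (n - m + 1) n, ω i = true} := by
      refine ⟨by omega, fun i hi => hall i ?_⟩
      simp only [Finset.mem_Icc] at hi ⊢
      omega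
    rw [hSe] at hmem
    exact hmem
  have hr0 : 0 ≤ 1 - p ^ m := by
    have := pow_le_one₀ hp0.le hp1.le (n := m); linarith
  have hr1 : 1 - p ^ m < 1 := by
    have := pow_pos hp0 m; linarith
  have hle : ∀ N, μ {ω | waitingTime m ω = 0} ≤ ENNReal.ofReal ((1 - p ^ m) ^ N) :=
    fun N => le_of_le_of_eq (measure_mono (hsubset N)) (runFree_meas p hp0 hp1 μ hμ m N)
  have hfin : μ {ω | waitingTime m ω = 0} ≠ ⊤ := measure_ne_top μ _
  have htr : ∀ N, (μ {ω | waitingTime m ω = 0}).toReal ≤ (1 - p ^ m) ^ N := by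
    intro N
    exact ENNReal.toReal_le_of_le_ofReal (pow_nonneg hr0 N) (hle N)
  have h0 : (μ {ω | waitingTime m ω = 0}).toReal = 0 := by
    by_contra hne
    have hpos : 0 < (μ {ω | waitingTime m ω = 0}).toReal :=
      lt_of_le_of_ne ENNReal.toReal_nonneg (Ne.symm hne)
    obtain ⟨N, hN⟩ := exists_pow_lt_of_lt_one hpos hr1
    exact absurd (htr N) (not_le.2 hN)
  rcases (ENNReal.toReal_eq_zero_iff _).1 h0 with h | h
  · exact h
  · exact absurd h hfin

theorem stmt14 (p : ℝ) (hp0 : 0 < p) (hp1 : p < 1) (k : ℕ) (hk : 1 ≤ k)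
    (μ : Measure (ℕ → Bool)) [IsProbabilityMeasure μ]
    (hμ : ∀ (n : ℕ) (b : ℕ → Bool),
      μ {ω | ∀ i, 1 ≤ i → i ≤ n → ω i = b i}
        = ENNReal.ofReal (∏ i ∈ Finset.Icc 1 n, if b i = true then p else 1 - p)) :
    (1 - PowerSeries.X) *
        PowerSeries.mk (fun n => (μ {ω | longestRun n ω = k}).toReal)
      = PowerSeries.mk (fun v => (μ {ω | waitingTime k ω = v}).toReal)
        - PowerSeries.mk (fun v => (μ {ω | waitingTime (k + 1) ω = v}).toReal) := by
  ext n
  rw [sub_mul, one_mul, map_sub, map_sub, coeff_mk, coeff_mk]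
  cases n with
  | zero =>
    rw [coeff_zero_X_mul, coeff_mk, sumform μ 0 k hk]
    simp [wt_zero_null p hp0 hp1 μ hμ k hk,
      wt_zero_null p hp0 hp1 μ hμ (k + 1) (by omega)]
  | succ n =>
    rw [coeff_succ_X_mul, coeff_mk, coeff_mk, sumform μ (n + 1) k hk, sumform μ n k hk,
      Finset.sum_Icc_succ_top (by omega : 1 ≤ n + 1),
      Finset.sum_Icc_succ_top (by omega : 1 ≤ n + 1)]
    ring
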